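/- The coordinate ring ℝ[x,y]/(x² + y² − 1) of the real algebraic circle S¹ is not a unique factorization domain. -/

import Mathlib

open MvPolynomial

/-- The coordinate ring `ℝ[x,y]/(x² + y² − 1)` of the real algebraic circle `S¹`. -/
abbrev circleRing : Type :=
  MvPolynomial (Fin 2) ℝ ⧸
    Ideal.span {(X 0 : MvPolynomial (Fin 2) ℝ) ^ 2 + (X 1 : MvPolynomial (Fin 2) ℝ) ^ 2 - 1}

namespace CircleNotUFD

open Polynomial AdjoinRoot

/-- `d = 1 - X²` in `ℝ[X]`. -/
noncomputable def d : ℝ[X] := 1 - Polynomial.X ^ 2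

/-- `f = Y² - (1 - X²)` viewed in `(ℝ[X])[Y]`. -/
noncomputable def f : Polynomial (Polynomial ℝ) := Polynomial.X ^ 2 - Polynomial.C d

lemma f_def : f = Polynomial.X ^ 2 - Polynomial.C d := rfl

lemma f_monic : f.Monic := by
  unfold f; exact monic_X_pow_sub_C d (by norm_num)

lemma f_degree : f.degree = 2 := by
  unfold f; exact degree_X_pow_sub_C (by norm_num) d

/-- The square of the adjoined root. -/
lemma root_sq : (root f) ^ 2 = of f d := by
  have h : mk f (Polynomial.X ^ 2 - Polynomial.C d) = 0 := by
    rw [← f_def]; exact mk_self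
  rw [map_sub, map_pow, mk_X, mk_C] at h
  linear_combination h

lemma of_inj : Function.Injective (of f) := by
  intro a b hab
  have h : mk f (Polynomial.C a) = mk f (Polynomial.C b) := by
    rwa [mk_C, mk_C]
  rw [mk_eq_mk, ← Polynomial.C_sub] at h
  by_contra hne
  have hC : Polynomial.C (a - b) ≠ 0 := by
    simpa [sub_eq_zero] using hne
  have := Polynomial.degree_le_of_dvd h hC
  rw [f_degree] at this
  have h2 : (Polynomial.C (a - b)).degree ≤ 0 := Polynomial.degree_C_le
  exact absurd (this.trans h2) (by norm_num)

/-- Every element of `AdjoinRoot f` is `a + b·root`. -/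
lemma rep (z : AdjoinRoot f) : ∃ a b : ℝ[X], z = of f a + of f b * root f := by
  obtain ⟨g, rfl⟩ := mk_surjective z
  refine ⟨(g %ₘ f).coeff 0, (g %ₘ f).coeff 1, ?_⟩
  have h1 : mk f g = mk f (g %ₘ f) := by
    rw [mk_eq_mk]
    exact ⟨g /ₘ f, by linear_combination (modByMonic_add_div g f).symm⟩
  have hdeg : (g %ₘ f).degree ≤ 1 := by
    have := degree_modByMonic_lt g f_monic
    rw [f_degree] at this
    exact Order.le_of_lt_succ (by exact_mod_cast this)
  have h2 := Polynomial.eq_X_add_C_of_degree_le_one hdeg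
  rw [h1]
  conv_lhs => rw [h2]
  rw [map_add, map_mul, mk_C, mk_C, mk_X]
  ring

/-- Conjugation `root ↦ -root`. -/
noncomputable def σ : AdjoinRoot f →+* AdjoinRoot f :=
  AdjoinRoot.lift (of f) (-(root f)) (by
    show Polynomial.eval₂ (of f) (-(root f)) (Polynomial.X ^ 2 - Polynomial.C d) = 0
    rw [Polynomial.eval₂_sub, Polynomial.eval₂_pow, Polynomial.eval₂_X, Polynomial.eval₂_C]
    have h : (-(root f)) ^ 2 = (root f) ^ 2 := by ring
    rw [h, root_sq, sub_self])

lemma σ_of (a : ℝ[X]) : σ (of f a) = of f a := lift_of _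

lemma σ_root : σ (root f) = -(root f) := lift_root _

lemma mul_conj (a b : ℝ[X]) :
    (of f a + of f b * root f) * σ (of f a + of f b * root f)
      = of f (a ^ 2 - d * b ^ 2) := by
  rw [map_add, map_mul, σ_of, σ_of, σ_root]
  have h : (of f a + of f b * root f) * (of f a + of f b * -(root f))
      = of f a ^ 2 - of f b ^ 2 * (root f) ^ 2 := by ring
  rw [h, root_sq, ← map_pow, ← map_pow, ← map_mul, ← map_sub]
  congr 1
  ring

/-- Evaluation at the point `(0, c)` on the circle, `c = ±1`. -/
noncomputable def ev (c : ℝ) (hc : c ^ 2 = 1) : AdjoinRoot f →+* ℝ :=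
  AdjoinRoot.lift (Polynomial.evalRingHom 0) c (by
    show Polynomial.eval₂ (Polynomial.evalRingHom 0) c (Polynomial.X ^ 2 - Polynomial.C d) = 0
    rw [Polynomial.eval₂_sub, Polynomial.eval₂_pow, Polynomial.eval₂_X, Polynomial.eval₂_C]
    simp [d, hc])

lemma ev_of (c : ℝ) (hc : c ^ 2 = 1) (p : ℝ[X]) : ev c hc (of f p) = p.eval 0 := lift_of _

lemma ev_root (c : ℝ) (hc : c ^ 2 = 1) : ev c hc (root f) = c := lift_root _

/-- Degree facts about the norm form `a² - (1-X²)b²`. -/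
lemma norm_facts (a b : ℝ[X]) (h : a ^ 2 - d * b ^ 2 ≠ 0) :
    Even ((a ^ 2 - d * b ^ 2).natDegree) ∧
      ((a ^ 2 - d * b ^ 2).natDegree = 0 → b = 0) := by
  have hrw : a ^ 2 - d * b ^ 2 = a ^ 2 + (Polynomial.X ^ 2 - 1) * b ^ 2 := by
    unfold d; ring
  rw [hrw]
  clear h hrw
  rcases eq_or_ne b 0 with hb | hb
  · subst hb
    constructor
    · simp only [ne_eq, OfNat.ofNat_ne_zero, not_false_eq_true, zero_pow, mul_zero, add_zero,
        Polynomial.natDegree_pow]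
      exact even_two_mul _
    · intro _; rfl
  · have hb2 : b ^ 2 ≠ 0 := pow_ne_zero _ hb
    have hq0 : ((Polynomial.X ^ 2 - 1 : ℝ[X])) ≠ 0 := by
      intro h0
      have := congrArg (Polynomial.eval 0) h0
      simp at this
    have hq : (Polynomial.X ^ 2 - 1) * b ^ 2 ≠ 0 := mul_ne_zero hq0 hb2
    have hm : (Polynomial.X ^ 2 - 1 : ℝ[X]).Monic := by
      have h1 : (Polynomial.X ^ 2 - 1 : ℝ[X]) = Polynomial.X ^ 2 - Polynomial.C 1 := by
        rw [map_one]
      rw [h1]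
      exact Polynomial.monic_X_pow_sub_C 1 two_ne_zero
    have hqdeg : ((Polynomial.X ^ 2 - 1) * b ^ 2).natDegree = 2 + 2 * b.natDegree := by
      rw [Polynomial.natDegree_mul hq0 hb2, Polynomial.natDegree_pow]
      congr 1
      have h1 : (Polynomial.X ^ 2 - 1 : ℝ[X]) = Polynomial.X ^ 2 - Polynomial.C 1 := by
        rw [map_one]
      rw [h1, Polynomial.natDegree_X_pow_sub_C]
    have hqlc : ((Polynomial.X ^ 2 - 1) * b ^ 2).leadingCoeff = b.leadingCoeff ^ 2 := by
      rw [Polynomial.leadingCoeff_mul, Polynomial.leadingCoeff_pow, hm.leadingCoeff, one_mul]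
    rcases eq_or_ne a 0 with ha | ha
    · subst ha
      simp only [ne_eq, OfNat.ofNat_ne_zero, not_false_eq_true, zero_pow, zero_add]
      constructor
      · rw [hqdeg]; exact ⟨1 + b.natDegree, by ring⟩
      · intro h0; rw [hqdeg] at h0; omega
    · have ha2 : a ^ 2 ≠ 0 := pow_ne_zero _ ha
      have hpdeg : (a ^ 2).natDegree = 2 * a.natDegree := by rw [Polynomial.natDegree_pow]
      rcases lt_trichotomy ((a ^ 2).natDegree) (((Polynomial.X ^ 2 - 1) * b ^ 2).natDegree)
        with hlt | heq | hgt
      · have hnd := Polynomial.natDegree_add_eq_right_of_natDegree_lt hlt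
        constructor
        · rw [hnd, hqdeg]; exact ⟨1 + b.natDegree, by ring⟩
        · intro h0; rw [hnd, hqdeg] at h0; omega
      · have hc : (a ^ 2 + (Polynomial.X ^ 2 - 1) * b ^ 2).coeff ((a ^ 2).natDegree)
            = a.leadingCoeff ^ 2 + b.leadingCoeff ^ 2 := by
          rw [Polynomial.coeff_add]
          congr 1
          · rw [Polynomial.coeff_natDegree, Polynomial.leadingCoeff_pow]
          · rw [heq, Polynomial.coeff_natDegree, hqlc]
        have hcpos : a.leadingCoeff ^ 2 + b.leadingCoeff ^ 2 ≠ 0 := by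
          have hla : a.leadingCoeff ≠ 0 := Polynomial.leadingCoeff_ne_zero.mpr ha
          have h1 : 0 < a.leadingCoeff ^ 2 + b.leadingCoeff ^ 2 :=
            add_pos_of_pos_of_nonneg (pow_two_pos_of_ne_zero hla) (sq_nonneg _)
          exact h1.ne'
        have hle : (a ^ 2 + (Polynomial.X ^ 2 - 1) * b ^ 2).natDegree ≤ (a ^ 2).natDegree := by
          have := Polynomial.natDegree_add_le (a ^ 2) ((Polynomial.X ^ 2 - 1) * b ^ 2)
          rwa [← heq, max_self] at this
        have hge : (a ^ 2).natDegree ≤ (a ^ 2 + (Polynomial.X ^ 2 - 1) * b ^ 2).natDegree :=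
          Polynomial.le_natDegree_of_ne_zero (by rw [hc]; exact hcpos)
        have hnd := le_antisymm hle hge
        constructor
        · rw [hnd, hpdeg]; exact even_two_mul _
        · intro h0
          rw [hnd] at h0
          rw [h0, hqdeg] at heq
          omega
      · have hnd := Polynomial.natDegree_add_eq_left_of_natDegree_lt hgt
        constructor
        · rw [hnd, hpdeg]; exact even_two_mul _
        · intro h0
          rw [hnd] at h0
          rw [h0, hqdeg] at hgt
          omega

lemma u_not_unit : ¬ IsUnit (of f Polynomial.X) := by
  intro hu
  have := hu.map (ev 1 (by norm_num))
  rw [ev_of, Polynomial.eval_X] at this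
  exact not_isUnit_zero this

lemma u_irred : Irreducible (of f Polynomial.X) := by
  refine ⟨u_not_unit, ?_⟩
  intro z w huzw
  obtain ⟨a, b, rfl⟩ := rep z
  obtain ⟨a', b', rfl⟩ := rep w
  have hN : (a ^ 2 - d * b ^ 2) * (a' ^ 2 - d * b' ^ 2) = Polynomial.X ^ 2 := by
    apply of_inj
    rw [map_mul, ← mul_conj, ← mul_conj, map_pow]
    calc ((of f a + of f b * root f) * σ (of f a + of f b * root f)) *
          ((of f a' + of f b' * root f) * σ (of f a' + of f b' * root f))
        = ((of f a + of f b * root f) * (of f a' + of f b' * root f)) *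
          σ ((of f a + of f b * root f) * (of f a' + of f b' * root f)) := by
          rw [map_mul]; ring
      _ = of f Polynomial.X * σ (of f Polynomial.X) := by rw [← huzw]
      _ = of f Polynomial.X ^ 2 := by rw [σ_of]; ring
  have hX2 : (Polynomial.X ^ 2 : ℝ[X]) ≠ 0 := pow_ne_zero _ Polynomial.X_ne_zero
  have hz0 : a ^ 2 - d * b ^ 2 ≠ 0 := by
    intro h0; rw [h0, zero_mul] at hN; exact hX2 hN.symm
  have hw0 : a' ^ 2 - d * b' ^ 2 ≠ 0 := by
    intro h0; rw [h0, mul_zero] at hN; exact hX2 hN.symm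
  obtain ⟨hze, hzc⟩ := norm_facts a b hz0
  obtain ⟨hwe, hwc⟩ := norm_facts a' b' hw0
  have hsum : (a ^ 2 - d * b ^ 2).natDegree + (a' ^ 2 - d * b' ^ 2).natDegree = 2 := by
    rw [← Polynomial.natDegree_mul hz0 hw0, hN, Polynomial.natDegree_pow,
      Polynomial.natDegree_X]
  have hcase : (a ^ 2 - d * b ^ 2).natDegree = 0 ∨ (a' ^ 2 - d * b' ^ 2).natDegree = 0 := by
    obtain ⟨k, hk⟩ := hze; obtain ⟨l, hl⟩ := hwe; omega
  have key : ∀ (p q : ℝ[X]), p ^ 2 - d * q ^ 2 ≠ 0 → (p ^ 2 - d * q ^ 2).natDegree = 0 →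
      q = 0 → IsUnit (of f p + of f q * root f) := by
    intro p q hpq hdeg hq
    subst hq
    have hp2 : p ^ 2 ≠ 0 := by simpa using hpq
    have hpdeg : p.natDegree = 0 := by
      have h0 : (p ^ 2).natDegree = 0 := by simpa using hdeg
      rw [Polynomial.natDegree_pow] at h0; omega
    have hp : p ≠ 0 := by intro h0; rw [h0] at hp2; simp at hp2
    have hup : IsUnit p := by
      rw [Polynomial.isUnit_iff]
      exact ⟨p.coeff 0, isUnit_iff_ne_zero.mpr (by
          intro h0
          apply hp
          rw [Polynomial.eq_C_of_natDegree_eq_zero hpdeg, h0, map_zero]),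
        (Polynomial.eq_C_of_natDegree_eq_zero hpdeg).symm⟩
    have := hup.map (of f)
    simpa using this
  rcases hcase with hc | hc
  · exact Or.inl (key a b hz0 hc (hzc hc))
  · exact Or.inr (key a' b' hw0 hc (hwc hc))

/-- The circle ideal. -/
noncomputable abbrev I : Ideal (MvPolynomial (Fin 2) ℝ) :=
  Ideal.span {(X 0 : MvPolynomial (Fin 2) ℝ) ^ 2 + (X 1 : MvPolynomial (Fin 2) ℝ) ^ 2 - 1}

noncomputable def toAdj₀ : MvPolynomial (Fin 2) ℝ →+* AdjoinRoot f :=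
  MvPolynomial.eval₂Hom ((of f).comp Polynomial.C) ![of f Polynomial.X, root f]

lemma toAdj₀_gen :
    toAdj₀ ((X 0 : MvPolynomial (Fin 2) ℝ) ^ 2 + (X 1 : MvPolynomial (Fin 2) ℝ) ^ 2 - 1) = 0 := by
  have h0 : toAdj₀ (X 0) = of f Polynomial.X := by simp [toAdj₀]
  have h1 : toAdj₀ (X 1) = root f := by simp [toAdj₀]
  rw [map_sub, map_add, map_pow, map_pow, map_one, h0, h1, root_sq, ← map_pow]
  rw [← map_add, ← map_one (of f), ← map_sub]
  convert map_zero (of f) using 2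
  unfold d; ring

noncomputable def Φ : circleRing →+* AdjoinRoot f :=
  Ideal.Quotient.lift I toAdj₀ (by
    intro p hp
    rw [Ideal.mem_span_singleton] at hp
    obtain ⟨c, rfl⟩ := hp
    rw [map_mul, toAdj₀_gen, zero_mul])

lemma Φ_mk (p : MvPolynomial (Fin 2) ℝ) : Φ (Ideal.Quotient.mk I p) = toAdj₀ p :=
  Ideal.Quotient.lift_mk I _ _

noncomputable def ΨA : ℝ[X] →+* circleRing :=
  Polynomial.eval₂RingHom ((Ideal.Quotient.mk I).comp MvPolynomial.C)
    (Ideal.Quotient.mk I (X 0))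

lemma gen_zero :
    (Ideal.Quotient.mk I (X 0)) ^ 2 + (Ideal.Quotient.mk I (X 1)) ^ 2 - 1 = 0 := by
  rw [← map_pow, ← map_pow, ← map_add, ← map_one (Ideal.Quotient.mk I), ← map_sub]
  rw [Ideal.Quotient.eq_zero_iff_mem]
  exact Ideal.subset_span rfl

noncomputable def Ψ : AdjoinRoot f →+* circleRing :=
  AdjoinRoot.lift ΨA (Ideal.Quotient.mk I (X 1)) (by
    show Polynomial.eval₂ ΨA (Ideal.Quotient.mk I (X 1)) (Polynomial.X ^ 2 - Polynomial.C d) = 0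
    rw [Polynomial.eval₂_sub, Polynomial.eval₂_pow, Polynomial.eval₂_X, Polynomial.eval₂_C]
    have hd : ΨA d = 1 - (Ideal.Quotient.mk I (X 0)) ^ 2 := by
      simp [ΨA, d]
    rw [hd]
    linear_combination gen_zero)

lemma Ψ_mk (g : ℝ[X][X]) :
    Ψ (mk f g) = Polynomial.eval₂ ΨA (Ideal.Quotient.mk I (X 1)) g :=
  AdjoinRoot.lift_mk _ _

lemma comp₁ : Ψ.comp Φ = RingHom.id circleRing := by
  apply Ideal.Quotient.ringHom_ext
  apply MvPolynomial.ringHom_ext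
  · intro r
    show Ψ (Φ (Ideal.Quotient.mk I (MvPolynomial.C r))) = Ideal.Quotient.mk I (MvPolynomial.C r)
    rw [Φ_mk]
    have h : toAdj₀ (MvPolynomial.C r) = of f (Polynomial.C r) := by simp [toAdj₀]
    rw [h]
    have h2 : Ψ (of f (Polynomial.C r)) = ΨA (Polynomial.C r) := AdjoinRoot.lift_of _
    rw [h2]
    simp [ΨA]
  · intro i
    fin_cases i
    · show Ψ (Φ (Ideal.Quotient.mk I (X 0))) = Ideal.Quotient.mk I (X 0)
      rw [Φ_mk]
      have h : toAdj₀ (X 0) = of f Polynomial.X := by simp [toAdj₀]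
      rw [h]
      have h2 : Ψ (of f Polynomial.X) = ΨA Polynomial.X := AdjoinRoot.lift_of _
      rw [h2]
      simp [ΨA]
    · show Ψ (Φ (Ideal.Quotient.mk I (X 1))) = Ideal.Quotient.mk I (X 1)
      rw [Φ_mk]
      have h : toAdj₀ (X 1) = root f := by simp [toAdj₀]
      rw [h]
      exact AdjoinRoot.lift_root _

lemma hinner : Φ.comp ΨA = of f := by
  apply Polynomial.ringHom_ext
  · intro r
    rw [RingHom.comp_apply]
    have h : ΨA (Polynomial.C r) = Ideal.Quotient.mk I (MvPolynomial.C r) := by simp [ΨA]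
    rw [h, Φ_mk]
    simp [toAdj₀]
  · rw [RingHom.comp_apply]
    have h : ΨA Polynomial.X = Ideal.Quotient.mk I (X 0) := by simp [ΨA]
    rw [h, Φ_mk]
    simp [toAdj₀]

lemma comp₂aux (g : ℝ[X][X]) :
    Φ (Polynomial.eval₂ ΨA (Ideal.Quotient.mk I (X 1)) g) = mk f g := by
  have hc : ∀ p : ℝ[X], Φ (ΨA p) = of f p := fun p => by
    rw [← RingHom.comp_apply, hinner]
  have hx : Φ (Ideal.Quotient.mk I (X 1)) = root f := by
    rw [Φ_mk]; simp [toAdj₀]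
  induction g using Polynomial.induction_on with
  | C a => rw [Polynomial.eval₂_C, hc, mk_C]
  | add p q hp hq => rw [Polynomial.eval₂_add, map_add, hp, hq, map_add]
  | monomial n a _ =>
      rw [Polynomial.eval₂_mul, Polynomial.eval₂_pow, Polynomial.eval₂_X, Polynomial.eval₂_C,
        map_mul, map_pow, hc, hx, map_mul, map_pow, mk_X, mk_C]

lemma comp₂ : Φ.comp Ψ = RingHom.id (AdjoinRoot f) := by
  refine RingHom.ext fun z => ?_
  obtain ⟨g, rfl⟩ := mk_surjective z
  rw [RingHom.comp_apply, RingHom.id_apply, Ψ_mk, comp₂aux]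

noncomputable def e : circleRing ≃+* AdjoinRoot f := RingEquiv.ofRingHom Φ Ψ comp₂ comp₁

lemma main [IsDomain circleRing] : ¬ UniqueFactorizationMonoid circleRing := by
  intro hUFD
  haveI hdom : IsDomain (AdjoinRoot f) :=
    MulEquiv.isDomain circleRing (e.symm.toMulEquiv)
  haveI hU : UniqueFactorizationMonoid (AdjoinRoot f) :=
    e.toMulEquiv.uniqueFactorizationMonoid hUFD
  have hp : Prime (of f Polynomial.X) :=
    (UniqueFactorizationMonoid.irreducible_iff_prime).mp u_irred
  have hdvd : of f Polynomial.X ∣ (1 - root f) * (1 + root f) := by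
    refine ⟨of f Polynomial.X, ?_⟩
    have h : (1 - root f) * (1 + root f) = 1 - (root f) ^ 2 := by ring
    rw [h, root_sq, ← map_mul, ← map_one (of f), ← map_sub]
    congr 1
    unfold d; ring
  rcases hp.2.2 _ _ hdvd with h | h
  · have h2 := map_dvd (ev (-1) (by norm_num)) h
    rw [ev_of, map_sub, map_one, ev_root, Polynomial.eval_X] at h2
    rw [zero_dvd_iff] at h2
    norm_num at h2
  · have h2 := map_dvd (ev 1 (by norm_num)) h
    rw [ev_of, map_add, map_one, ev_root, Polynomial.eval_X] at h2
    rw [zero_dvd_iff] at h2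
    norm_num at h2

end CircleNotUFD

/-- The coordinate ring `ℝ[x,y]/(x² + y² − 1)` of the real circle
`S¹` (an integral domain) is not a unique factorization domain. -/
theorem circleRing_not_UFD [IsDomain circleRing] :
    ¬ UniqueFactorizationMonoid circleRing :=
  CircleNotUFD.main
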